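/- Let p, q ∈ ℝⁿ be vectors with all entries strictly positive. Then (1/4)·‖p − q‖₁² ≤ max{⟨p⟩, ⟨q⟩} · ( D(p‖q) − ⟨p⟩ + ⟨q⟩ ). -/

import Mathlib

open Real Finset

/-- `(t+1) log t ≥ 2(t-1)` for `t ≥ 1`. -/
lemma aux_phi (t : ℝ) (ht : 1 ≤ t) : 2*(t-1) ≤ (t+1) * Real.log t := by
  set φ : ℝ → ℝ := fun x => (x+1) * Real.log x - 2*(x-1) with hφ
  have hderiv : ∀ x ∈ Set.Ioi (1:ℝ), HasDerivAt φ (Real.log x + 1/x - 1) x := by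
    intro x hx
    have hx0 : (0:ℝ) < x := lt_trans one_pos hx
    have h1 : HasDerivAt (fun y : ℝ => (y+1) * Real.log y)
        (1 * Real.log x + (x+1) * x⁻¹) x :=
      (((hasDerivAt_id x).add_const 1).mul (Real.hasDerivAt_log hx0.ne'))
    have h2 : HasDerivAt (fun y : ℝ => 2*(y-1)) 2 x := by
      simpa using ((hasDerivAt_id x).sub_const 1).const_mul 2
    have h3 := h1.sub h2
    refine h3.congr_deriv ?_
    rw [add_mul, mul_inv_cancel₀ hx0.ne']
    ring
  have hcont : ContinuousOn φ (Set.Ici 1) := by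
    apply ContinuousOn.sub
    · exact (continuous_id.add continuous_const).continuousOn.mul
        (Real.continuousOn_log.mono (fun x hx => by
          simp only [Set.mem_compl_iff, Set.mem_singleton_iff]
          exact ne_of_gt (lt_of_lt_of_le one_pos hx)))
    · exact (continuous_const.mul (continuous_id.sub continuous_const)).continuousOn
  have hmono : MonotoneOn φ (Set.Ici 1) := by
    apply monotoneOn_of_deriv_nonneg (convex_Ici 1) hcont
    · intro x hx
      rw [interior_Ici] at hx
      exact (hderiv x hx).differentiableAt.differentiableWithinAt
    · intro x hx
      rw [interior_Ici] at hx
      rw [(hderiv x hx).deriv]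
      have hx0 : (0:ℝ) < x := lt_trans one_pos hx
      have h4 := Real.log_le_sub_one_of_pos (show (0:ℝ) < 1/x by positivity)
      rw [Real.log_div one_ne_zero hx0.ne', Real.log_one] at h4
      have h5 : (0:ℝ) < 1/x := by positivity
      linarith
  have h0 : φ 1 = 0 := by simp [hφ]
  have h6 := hmono Set.self_mem_Ici (Set.mem_Ici.mpr ht) ht
  rw [h0] at h6
  simp only [hφ] at h6
  linarith

/-- `(t+1) log t ≤ 2(t-1)` for `0 < t ≤ 1`. -/
lemma aux_phi' (t : ℝ) (ht0 : 0 < t) (ht1 : t ≤ 1) : (t+1) * Real.log t ≤ 2*(t-1) := by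
  have hu : 1 ≤ 1/t := by rw [le_div_iff₀ ht0]; linarith
  have h := aux_phi (1/t) hu
  rw [Real.log_div one_ne_zero ht0.ne', Real.log_one] at h
  have key := mul_le_mul_of_nonneg_left h ht0.le
  have e1 : t * (2*(1/t-1)) = 2 - 2*t := by field_simp
  have e2 : t * ((1/t + 1) * (0 - Real.log t)) = -((1+t) * Real.log t) := by
    field_simp; ring
  rw [e1, e2] at key
  linarith

/-- Key pointwise bound: `3(t-1)² ≤ 2(t+2)(t log t - t + 1)` for `t > 0`. -/
lemma aux_key (t : ℝ) (ht : 0 < t) :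
    3*(t-1)^2 ≤ 2*(t+2)*(t*Real.log t - t + 1) := by
  set h : ℝ → ℝ := fun x => 2*(x+2)*(x*Real.log x - x + 1) - 3*(x-1)^2 with hh
  have hderiv : ∀ x : ℝ, 0 < x →
      HasDerivAt h (4*((x+1)*Real.log x - 2*(x-1))) x := by
    intro x hx0
    have h1 : HasDerivAt (fun y : ℝ => y * Real.log y)
        (1 * Real.log x + x * x⁻¹) x :=
      (hasDerivAt_id x).mul (Real.hasDerivAt_log hx0.ne')
    have h2 : HasDerivAt (fun y : ℝ => y * Real.log y - y + 1)
        (1 * Real.log x + x * x⁻¹ - 1) x := (h1.sub (hasDerivAt_id x)).add_const 1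
    have h3 : HasDerivAt (fun y : ℝ => 2*(y+2))
        2 x := by simpa using ((hasDerivAt_id x).add_const 2).const_mul 2
    have h4 := (h3.mul h2)
    have h5 : HasDerivAt (fun y : ℝ => 3*(y-1)^2) (3*(2*(x-1))) x := by
      simpa using (((hasDerivAt_id x).sub_const 1).pow 2).const_mul 3
    have h6 := h4.sub h5
    refine h6.congr_deriv ?_
    rw [mul_inv_cancel₀ hx0.ne']
    ring
  have hone : h 1 = 0 := by simp [hh]
  rcases le_or_gt 1 t with h1t | ht1
  · -- monotone on [1, ∞)
    have hcont : ContinuousOn h (Set.Ici 1) := by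
      intro x hx
      exact (hderiv x (lt_of_lt_of_le one_pos hx)).continuousAt.continuousWithinAt
    have hmono : MonotoneOn h (Set.Ici 1) := by
      apply monotoneOn_of_deriv_nonneg (convex_Ici 1) hcont
      · intro x hx
        rw [interior_Ici] at hx
        exact (hderiv x (lt_trans one_pos hx)).differentiableAt.differentiableWithinAt
      · intro x hx
        rw [interior_Ici] at hx
        rw [(hderiv x (lt_trans one_pos hx)).deriv]
        have := aux_phi x hx.le
        linarith
    have := hmono Set.self_mem_Ici (Set.mem_Ici.mpr h1t) h1t
    rw [hone] at this
    simp only [hh] at this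
    linarith
  · -- antitone on [t, 1]
    have hcont : ContinuousOn h (Set.Icc t 1) := by
      intro x hx
      exact (hderiv x (lt_of_lt_of_le ht hx.1)).continuousAt.continuousWithinAt
    have hanti : AntitoneOn h (Set.Icc t 1) := by
      apply antitoneOn_of_deriv_nonpos (convex_Icc t 1) hcont
      · intro x hx
        rw [interior_Icc] at hx
        exact (hderiv x (lt_trans ht hx.1)).differentiableAt.differentiableWithinAt
      · intro x hx
        rw [interior_Icc] at hx
        rw [(hderiv x (lt_trans ht hx.1)).deriv]
        have := aux_phi' x (lt_trans ht hx.1) hx.2.le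
        linarith
    have := hanti (Set.mem_Icc.mpr ⟨le_refl t, ht1.le⟩)
      (Set.mem_Icc.mpr ⟨ht1.le, le_refl 1⟩) ht1.le
    rw [hone] at this
    simp only [hh] at this
    linarith

/-- Pointwise bound in `a, b` form. -/
lemma aux_key' (a b : ℝ) (ha : 0 < a) (hb : 0 < b) :
    3*(a-b)^2 ≤ 2*(a+2*b)*(a*Real.log (a/b) - a + b) := by
  have h := aux_key (a/b) (by positivity)
  have key := mul_le_mul_of_nonneg_left h (sq_nonneg b)
  have e1 : b^2 * (3*(a/b-1)^2) = 3*(a-b)^2 := by field_simp; try ring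
  have e2 : b^2 * (2*(a/b+2)*(a/b*Real.log (a/b) - a/b + 1))
      = 2*(a+2*b)*(a*Real.log (a/b) - a + b) := by field_simp; try ring
  rw [e1, e2] at key
  linarith

theorem stmt4 {n : ℕ} (p q : Fin n → ℝ)
    (hp : ∀ i, 0 < p i) (hq : ∀ i, 0 < q i) :
    (1 / 4) * (∑ i, |p i - q i|) ^ 2
      ≤ max (∑ i, p i) (∑ i, q i)
        * ((∑ i, p i * Real.log (p i / q i)) - (∑ i, p i) + (∑ i, q i)) := by
  set P := ∑ i, p i with hP
  set Q := ∑ i, q i with hQ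
  set M := max P Q with hM
  clear_value P Q
  -- per-index divergence
  set d : Fin n → ℝ := fun i => p i * Real.log (p i / q i) - p i + q i with hd
  clear_value d
  have hdsum : (∑ i, p i * Real.log (p i / q i)) - P + Q = ∑ i, d i := by
    simp [hd, Finset.sum_sub_distrib, Finset.sum_add_distrib, hP, hQ]
  have hkey : ∀ i, 3*(p i - q i)^2 ≤ 2*(p i + 2*q i) * d i := by
    intro i; simp only [hd]; exact aux_key' (p i) (q i) (hp i) (hq i)
  have hdnn : ∀ i, 0 ≤ d i := by
    intro i
    have h1 := hkey i
    have h2 : 0 < 2*(p i + 2*q i) := by have := hp i; have := hq i; linarith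
    nlinarith [sq_nonneg (p i - q i)]
  -- weights
  set w : Fin n → ℝ := fun i => 2*(p i + 2*q i)/3 with hw
  clear_value w
  have hwpos : ∀ i, 0 < w i := by
    intro i; have := hp i; have := hq i; simp only [hw]; positivity
  -- Cauchy-Schwarz
  have hcs : (∑ i, |p i - q i|)^2 ≤ (∑ i, (p i - q i)^2 / w i) * (∑ i, w i) := by
    have h2 := Finset.sum_mul_sq_le_sq_mul_sq Finset.univ
      (fun i => |p i - q i| / Real.sqrt (w i)) (fun i => Real.sqrt (w i))
    have e1 : ∀ i : Fin n, |p i - q i| / Real.sqrt (w i) * Real.sqrt (w i) = |p i - q i| := by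
      intro i
      rw [div_mul_cancel₀]
      exact (Real.sqrt_pos.mpr (hwpos i)).ne'
    have e2 : ∀ i : Fin n, (|p i - q i| / Real.sqrt (w i))^2 = (p i - q i)^2 / w i := by
      intro i
      rw [div_pow, sq_abs, Real.sq_sqrt (hwpos i).le]
    have e3 : ∀ i : Fin n, (Real.sqrt (w i))^2 = w i := fun i => Real.sq_sqrt (hwpos i).le
    calc (∑ i, |p i - q i|)^2
        = (∑ i, |p i - q i| / Real.sqrt (w i) * Real.sqrt (w i))^2 := by
          congr 1; exact Finset.sum_congr rfl (fun i _ => (e1 i).symm)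
      _ ≤ (∑ i, (|p i - q i| / Real.sqrt (w i))^2) * (∑ i, (Real.sqrt (w i))^2) := h2
      _ = (∑ i, (p i - q i)^2 / w i) * (∑ i, w i) := by
          congr 1
          · exact Finset.sum_congr rfl (fun i _ => e2 i)
          · exact Finset.sum_congr rfl (fun i _ => e3 i)
  have hterm : ∀ i : Fin n, (p i - q i)^2 / w i ≤ d i := by
    intro i
    rw [div_le_iff₀ (hwpos i)]
    have h1 := hkey i
    simp only [hw]
    nlinarith [h1]
  have hsum1 : (∑ i, (p i - q i)^2 / w i) ≤ ∑ i, d i :=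
    Finset.sum_le_sum (fun i _ => hterm i)
  have hsumw : (∑ i, w i) = 2*(P + 2*Q)/3 := by
    simp only [hw]
    rw [← Finset.sum_div, ← Finset.mul_sum, Finset.sum_add_distrib, ← Finset.mul_sum]
    rw [hP, hQ]
  have hD' : 0 ≤ ∑ i, d i := Finset.sum_nonneg (fun i _ => hdnn i)
  have hwnn : 0 ≤ ∑ i, w i := Finset.sum_nonneg (fun i _ => (hwpos i).le)
  have hcs2 : (∑ i, |p i - q i|)^2 ≤ (∑ i, d i) * (2*(P + 2*Q)/3) := by
    calc (∑ i, |p i - q i|)^2 ≤ (∑ i, (p i - q i)^2 / w i) * (∑ i, w i) := hcs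
      _ ≤ (∑ i, d i) * (∑ i, w i) := mul_le_mul_of_nonneg_right hsum1 hwnn
      _ = (∑ i, d i) * (2*(P + 2*Q)/3) := by rw [hsumw]
  have hPM : P ≤ M := le_max_left _ _
  have hQM : Q ≤ M := le_max_right _ _
  have hPnn : 0 ≤ P := by rw [hP]; exact Finset.sum_nonneg (fun i _ => (hp i).le)
  have hQnn : 0 ≤ Q := by rw [hQ]; exact Finset.sum_nonneg (fun i _ => (hq i).le)
  rw [hdsum]
  nlinarith [mul_nonneg (sub_nonneg.mpr hPM) hD', mul_nonneg (sub_nonneg.mpr hQM) hD',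
    mul_nonneg (le_trans hPnn hPM) hD']
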